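/- arXiv:2302.10162 — 5 statements merged into one kernel-verified Lean document; each statement's English description precedes it below -/
import Mathlib

section
/- Let p be an odd prime, h ≥ 1, q = p^h, and let F be an algebraically closed field of characteristic p. Let a, b ∈ F be such that there is no element t ∈ F with a = 2(t+1)^{q+1} and b = 2 + t^q + t. Then the bivariate polynomial F(U,V) = V·(2(U+1)^{q+1} − a) − U^q − U − 2 + b is irreducible in F[U,V]. -/
open Polynomial

open scoped Classical in
noncomputable instance fieldNormalizationMonoid (K : Type*) [Field K] :
    NormalizationMonoid K where
  normUnit a := if h : a = 0 then 1 else (Units.mk0 a h)⁻¹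
  normUnit_zero := dif_pos rfl
  normUnit_one := by
    ext
    simp
  normUnit_mul_units {a} u ha := by
    ext
    rw [dif_neg (mul_ne_zero ha u.ne_zero), dif_neg ha]
    simp [mul_inv, mul_comm]

theorem stmt_0 (p h q : ℕ) [Fact p.Prime] (hodd : Odd p) (hh : 0 < h) (hq : q = p ^ h)
    (F : Type) [Field F] [IsAlgClosed F] [CharP F p] (a b : F)
    (hab : ¬ ∃ t : F, a = 2 * (t + 1) ^ (q + 1) ∧ b = 2 + t ^ q + t) :
    Irreducible
      ((C (2 * (X + 1) ^ (q + 1) - C a) * X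
          - C (X ^ q + X + C 2 - C b)) : Polynomial (Polynomial F)) := by
  have hp := Fact.out (p := p.Prime)
  have h2 : (2 : F) ≠ 0 := by
    intro h0
    have hdvd : p ∣ 2 := (CharP.cast_eq_zero_iff F p 2).mp (by push_cast; exact h0)
    have := (Nat.prime_dvd_prime_iff_eq hp Nat.prime_two).mp hdvd
    subst this
    simp [Nat.odd_iff] at hodd
  set f : Polynomial F := 2 * (X + 1) ^ (q + 1) - C a with hf
  set g : Polynomial F := X ^ q + X + C 2 - C b with hg
  have hdegf : f.degree = ((q : ℕ) + 1 : ℕ) := by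
    have hd1 : ((X + 1 : Polynomial F) ^ (q + 1)).degree = ((q + 1 : ℕ) : WithBot ℕ) := by
      have h1 : (X + 1 : Polynomial F).degree = 1 := by simpa using degree_X_add_C (1 : F)
      rw [degree_pow, h1]
      simp
    have hd2 : (2 * (X + 1) ^ (q + 1) : Polynomial F).degree = ((q + 1 : ℕ) : WithBot ℕ) := by
      rw [show (2 : Polynomial F) = C 2 from (map_ofNat C 2).symm, degree_C_mul h2, hd1]
    rw [hf, degree_sub_eq_left_of_degree_lt]
    · exact hd2
    · rw [hd2]
      exact lt_of_le_of_lt degree_C_le (by exact_mod_cast WithBot.coe_lt_coe.mpr (Nat.succ_pos q))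
  have hfne : f ≠ 0 := ne_zero_of_degree_gt (n := ⊥) (by rw [hdegf]; exact WithBot.bot_lt_coe _)
  have hroot : ∀ t : F, ¬ (f.eval t = 0 ∧ g.eval t = 0) := by
    rintro t ⟨hft, hgt⟩
    apply hab
    refine ⟨t, ?_, ?_⟩
    · simp [hf] at hft
      linear_combination -hft
    · simp [hg] at hgt
      linear_combination -hgt
  set P : Polynomial (Polynomial F) := C f * X - C g with hP
  have hprim : P.IsPrimitive := by
    intro r hr
    rw [C_dvd_iff_dvd_coeff] at hr
    have hr1 : r ∣ f := by have := hr 1; simpa [hP, coeff_sub] using this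
    have hr0 : r ∣ -g := by have := hr 0; simpa [hP] using this
    by_contra hu
    have hdeg : r.degree ≠ 0 := fun hd => hu (isUnit_iff_degree_eq_zero.mpr hd)
    obtain ⟨t, ht⟩ := IsAlgClosed.exists_root r hdeg
    refine hroot t ⟨?_, ?_⟩
    · obtain ⟨s, hs⟩ := hr1; rw [hs]; simp [ht.eq_zero]
    · obtain ⟨s, hs⟩ := hr0
      have : (-g).eval t = 0 := by rw [hs]; simp [ht.eq_zero]
      simpa using this
  letI : NormalizedGCDMonoid (Polynomial F) :=
    UniqueFactorizationMonoid.toNormalizedGCDMonoid _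
  rw [hprim.irreducible_iff_irreducible_map_fraction_map (K := FractionRing (Polynomial F))]
  set φ := algebraMap (Polynomial F) (FractionRing (Polynomial F)) with hφ
  have hφf : φ f ≠ 0 := fun h0 => hfne ((map_eq_zero_iff φ (IsFractionRing.injective _ _)).mp h0)
  apply irreducible_of_degree_eq_one
  have hmap : P.map φ = C (φ f) * X + C (-(φ g)) := by
    simp [hP, sub_eq_add_neg, Polynomial.map_add, Polynomial.map_mul, Polynomial.map_neg]
  rw [hmap, degree_linear hφf]
end

section
/- Let p be a prime, h ≥ 1, q = p^h, F an algebraically closed field of characteristic p, and K = F(m) the rational function field over F. Let a, b ∈ F with a^{q+1} + b^q + b ≠ 0. Then the polynomial f(T) = T^{q+1} + m^q·T^q + m·T − ((m·a − b)^q + m·a − b) is irreducible in K[T]. -/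
open Polynomial

variable {R : Type*} [CommRing R]

/-- The ring hom on `R[X][X]` swapping the two variables. -/
noncomputable def swapHom : R[X][X] →+* R[X][X] :=
  eval₂RingHom (eval₂RingHom (C.comp C) X) (C X)

@[simp] lemma swapHom_X : swapHom (X : R[X][X]) = C X := by
  simp [swapHom]

@[simp] lemma swapHom_C_X : swapHom (C (X : R[X])) = (X : R[X][X]) := by
  simp [swapHom]

@[simp] lemma swapHom_C_C (a : R) : swapHom (C (C a) : R[X][X]) = C (C a) := by
  simp [swapHom]

lemma swapHom_swapHom : (swapHom : R[X][X] →+* R[X][X]).comp swapHom = RingHom.id _ := by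
  apply Polynomial.ringHom_ext'
  · apply Polynomial.ringHom_ext'
    · ext a
      simp
    · simp
  · simp

/-- The ring equivalence on `R[X][X]` swapping the two variables. -/
noncomputable def swapEquiv : R[X][X] ≃+* R[X][X] :=
  RingEquiv.ofRingHom swapHom swapHom swapHom_swapHom swapHom_swapHom

@[simp] lemma swapEquiv_apply (f : R[X][X]) : swapEquiv f = swapHom f := rfl

lemma eisen_irred (F : Type) [Field F] (q : ℕ) (hq2 : 2 ≤ q) :
    Irreducible (((X : F[X][X]) ^ (q + 1) + C (X ^ q + X))) := by
  have hmonic : ((X : F[X][X]) ^ (q + 1) + C (X ^ q + X)).Monic :=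
    monic_X_pow_add_C _ (Nat.succ_ne_zero q)
  have hdeg : ((X : F[X][X]) ^ (q + 1) + C (X ^ q + X)).natDegree = q + 1 :=
    natDegree_X_pow_add_C
  have h1 : q - 1 + 1 = q := by omega
  have hXdvd : (X : F[X]) ∣ X ^ q + X := ⟨X ^ (q - 1) + 1, by
    rw [mul_add, mul_one, ← pow_succ', h1]⟩
  refine Polynomial.IsEisensteinAt.irreducible
    (𝓟 := Ideal.span {(X : F[X])}) ?_ ?_ hmonic.isPrimitive (by omega)
  · constructor
    · rw [hmonic.leadingCoeff, Ideal.mem_span_singleton, X_dvd_iff]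
      simp
    · intro n hn
      rw [hdeg] at hn
      rw [coeff_add, coeff_X_pow, if_neg (by omega), coeff_C]
      split
      · rwa [Ideal.mem_span_singleton, zero_add]
      · simp
    · rw [coeff_add, coeff_X_pow, if_neg (by omega), coeff_C, if_pos rfl, zero_add,
        pow_two, Ideal.span_singleton_mul_span_singleton, Ideal.mem_span_singleton]
      intro hd
      rw [← pow_two, X_pow_dvd_iff] at hd
      have := hd 1 (by omega)
      rw [coeff_add, coeff_X_pow, if_neg (by omega), coeff_X_one] at this
      simp at this
  · exact (Ideal.span_singleton_prime X_ne_zero).mpr prime_X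

/-- `X^q + X + C (X^(q+1))` is irreducible in `F[X][X]`. -/
lemma S1_irred (F : Type) [Field F] (q : ℕ) (hq2 : 2 ≤ q) :
    Irreducible (((X : F[X][X]) ^ q + X + C (X ^ (q + 1)))) := by
  have h := eisen_irred F q hq2
  rw [← MulEquiv.irreducible_iff (swapEquiv : F[X][X] ≃+* F[X][X])]
  convert h using 1
  simp only [swapEquiv_apply, map_add, map_pow, swapHom_X, swapHom_C_X]
  ring

/-- `X^q + X + C (t^(q+1))` is irreducible over `RatFunc F`. -/
lemma S0_irred (F : Type) [Field F] (q : ℕ) (hq2 : 2 ≤ q) :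
    Irreducible (((X : (RatFunc F)[X]) ^ q + X + C (RatFunc.X ^ (q + 1)))) := by
  have hm : (((X : F[X][X]) ^ q + X + C (X ^ (q + 1)))).Monic := by
    rw [add_assoc]
    refine monic_X_pow_add ?_
    refine lt_of_le_of_lt (degree_add_le _ _) ?_
    rw [degree_X, degree_C (pow_ne_zero _ (X_ne_zero (R := F)))]
    simpa using by exact_mod_cast hq2
  have := (Monic.irreducible_iff_irreducible_map_fraction_map (K := RatFunc F) hm).mp
    (S1_irred F q hq2)
  convert this using 1
  simp [Polynomial.map_add, Polynomial.map_pow, map_C, map_X, RatFunc.algebraMap_X]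

/-- The substitution `X ↦ C α * X + C β` as an algebra automorphism. -/
noncomputable def linSub {L : Type} [Field L] (α β : L) (hα : α ≠ 0) : L[X] ≃ₐ[L] L[X] :=
  AlgEquiv.ofAlgHom (aeval (C α * X + C β)) (aeval (C α⁻¹ * X + C (-(β / α))))
    (by
      apply Polynomial.algHom_ext
      simp only [AlgHom.comp_apply, AlgHom.coe_id, id_eq, map_add, map_mul, aeval_X, aeval_C,
        algebraMap_eq]
      rw [mul_add, ← mul_assoc, ← C_mul, inv_mul_cancel₀ hα, C_1, one_mul, ← C_mul, add_assoc,
        ← C_add, show α⁻¹ * β + -(β / α) = 0 by field_simp; ring, C_0, add_zero])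
    (by
      apply Polynomial.algHom_ext
      simp only [AlgHom.comp_apply, AlgHom.coe_id, id_eq, map_add, map_mul, aeval_X, aeval_C,
        algebraMap_eq]
      rw [mul_add, ← mul_assoc, ← C_mul, mul_inv_cancel₀ hα, C_1, one_mul, ← C_mul, add_assoc,
        ← C_add, show α * -(β / α) + β = 0 by field_simp; ring, C_0, add_zero])

lemma linSub_apply {L : Type} [Field L] (α β : L) (hα : α ≠ 0) (f : L[X]) :
    linSub α β hα f = f.comp (C α * X + C β) := by
  simp [linSub, AlgEquiv.ofAlgHom, aeval_def, comp, algebraMap_eq]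

theorem stmt_2 (p h q : ℕ) [Fact p.Prime] (hh : 0 < h) (hq : q = p ^ h)
    (F : Type) [Field F] [IsAlgClosed F] [CharP F p] (a b : F)
    (hab : a ^ (q + 1) + b ^ q + b ≠ 0) :
    Irreducible
      ((X ^ (q + 1) + C (RatFunc.X ^ q) * X ^ q + C RatFunc.X * X
          - C ((RatFunc.X * RatFunc.C a - RatFunc.C b) ^ q
              + (RatFunc.X * RatFunc.C a - RatFunc.C b))) : Polynomial (RatFunc F)) := by
  classical
  have hp2 : 2 ≤ p := (Fact.out : p.Prime).two_le
  have hq2 : 2 ≤ q := by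
    rw [hq]; exact Nat.one_lt_pow (by omega) (by omega)
  haveI : CharP F[X] p := charP_of_injective_ringHom C_injective p
  haveI : CharP F[X][X] p := charP_of_injective_ringHom C_injective p
  haveI : CharP (RatFunc F) p :=
    charP_of_injective_ringHom (IsFractionRing.injective F[X] (RatFunc F)) p
  haveI : CharP (RatFunc F)[X] p := charP_of_injective_ringHom C_injective p
  letI : NormalizationMonoid F[X] := inferInstance
  letI : NormalizedGCDMonoid F[X] := UniqueFactorizationMonoid.toNormalizedGCDMonoid F[X]
  have hsub2 : ∀ x y : F[X][X], (x - y) ^ q = x ^ q - y ^ q := fun x y => by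
    rw [hq]; exact sub_pow_char_pow x y h
  have hsubK : ∀ x y : (RatFunc F)[X], (x - y) ^ q = x ^ q - y ^ q := fun x y => by
    rw [hq]; exact sub_pow_char_pow x y h
  have haddK : ∀ x y : (RatFunc F)[X], (x + y) ^ q = x ^ q + y ^ q := fun x y => by
    rw [hq]; exact add_pow_char_pow x y p h
  -- the bivariate versions
  set P₀ : F[X][X] := X ^ (q + 1) + C (X ^ q) * X ^ q + C X * X
      - C ((X * C a - C b) ^ q + (X * C a - C b)) with hP₀def
  set Q : F[X][X] := C ((X - C a) ^ q) * X ^ q + C (X - C a) * X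
      + C (X ^ (q + 1) + C (b ^ q + b)) with hQdef
  -- swap sends P₀ to Q
  have hswap : swapEquiv P₀ = Q := by
    rw [hP₀def, hQdef]
    simp only [swapEquiv_apply, map_add, map_sub, map_mul, map_pow,
      swapHom_X, swapHom_C_X, swapHom_C_C, hsub2]
    ring
  -- P₀ is monic in the outer variable
  have hP₀m : P₀.Monic := by
    rw [hP₀def]
    have : (X ^ (q + 1) + C (X ^ q) * X ^ q + C X * X
        - C ((X * C a - C b) ^ q + (X * C a - C b)) : F[X][X])
        = X ^ (q + 1) + (C (X ^ q) * X ^ q + C X * X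
        - C ((X * C a - C b) ^ q + (X * C a - C b))) := by ring
    rw [this]
    refine monic_X_pow_add ?_
    refine lt_of_le_of_lt (degree_sub_le _ _) (max_lt ?_ ?_)
    · refine lt_of_le_of_lt (degree_add_le _ _) (max_lt ?_ ?_)
      · refine lt_of_le_of_lt (degree_mul_le _ _) ?_
        refine lt_of_le_of_lt (add_le_add degree_C_le (degree_X_pow (R := F[X]) q).le) ?_
        rw [zero_add]
        exact_mod_cast WithBot.coe_lt_coe.mpr (by omega)
      · refine lt_of_le_of_lt (degree_mul_le _ _) ?_
        refine lt_of_le_of_lt (add_le_add degree_C_le degree_X_le) ?_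
        rw [zero_add]
        exact_mod_cast WithBot.coe_lt_coe.mpr (by omega)
    · refine lt_of_le_of_lt degree_C_le ?_
      exact_mod_cast WithBot.coe_lt_coe.mpr (by omega)
  -- Q is primitive
  have hQprim : Q.IsPrimitive := by
    intro r hr
    rw [C_dvd_iff_dvd_coeff] at hr
    have h1 : r ∣ X - C a := by
      have := hr 1
      rwa [hQdef, coeff_add, coeff_add, coeff_C_mul, coeff_C_mul, coeff_X_pow,
        if_neg (by omega), coeff_X_one, coeff_C, if_neg (by omega), mul_zero, zero_add,
        mul_one, add_zero] at this
    have h0 : r ∣ X ^ (q + 1) + C (b ^ q + b) := by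
      have := hr 0
      rwa [hQdef, coeff_add, coeff_add, coeff_C_mul, coeff_C_mul, coeff_X_pow,
        if_neg (by omega), coeff_X_zero, mul_zero, mul_zero, zero_add, zero_add,
        coeff_C, if_pos rfl] at this
    obtain ⟨s, hs⟩ := h1
    rcases (irreducible_X_sub_C a).isUnit_or_isUnit hs with hu | hu
    · exact hu
    · exfalso
      obtain ⟨u, rfl⟩ := hu
      have hXa : (X - C a) ∣ r := ⟨↑u⁻¹, by rw [hs, mul_assoc, Units.mul_inv, mul_one]⟩
      have hdvd : (X - C a) ∣ X ^ (q + 1) + C (b ^ q + b) := hXa.trans h0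
      rw [dvd_iff_isRoot] at hdvd
      simp only [IsRoot, eval_add, eval_pow, eval_X, eval_C] at hdvd
      exact hab (by linear_combination hdvd)
  -- the image of Q in (RatFunc F)[X] is irreducible, via the substitution automorphism
  have hα : (RatFunc.X - RatFunc.C a : (RatFunc F)) ≠ 0 := by
    have halg : algebraMap F[X] (RatFunc F) (X - C a) = RatFunc.X - RatFunc.C a := by
      rw [map_sub, RatFunc.algebraMap_X, RatFunc.algebraMap_C]
    rw [← halg]
    intro h0
    exact X_sub_C_ne_zero a ((map_eq_zero_iff _ (IsFractionRing.injective F[X] (RatFunc F))).mp h0)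
  have hQK : Q.map (algebraMap F[X] (RatFunc F)) =
      (linSub (RatFunc.X - RatFunc.C a) (RatFunc.C b) hα)
        ((X : (RatFunc F)[X]) ^ q + X + C (RatFunc.X ^ (q + 1))) := by
    rw [linSub_apply, hQdef]
    simp only [Polynomial.map_add, Polynomial.map_mul, Polynomial.map_pow, Polynomial.map_sub,
      Polynomial.map_C, Polynomial.map_X]
    simp only [map_sub, map_add, map_pow, map_mul, RatFunc.algebraMap_X, RatFunc.algebraMap_C]
    simp only [add_comp, pow_comp, X_comp, C_comp, haddK, hsubK, mul_pow]
    ring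
  have hQKirr : Irreducible (Q.map (algebraMap F[X] (RatFunc F))) := by
    rw [hQK]
    exact (MulEquiv.irreducible_iff _).mpr (S0_irred F q hq2)
  have hQirr : Irreducible Q :=
    (hQprim.irreducible_iff_irreducible_map_fraction_map (K := RatFunc F)).mpr hQKirr
  have hP₀irr : Irreducible P₀ := by
    rw [← MulEquiv.irreducible_iff (swapEquiv : F[X][X] ≃+* F[X][X]), hswap]
    exact hQirr
  have hfin := (hP₀m.irreducible_iff_irreducible_map_fraction_map (K := RatFunc F)).mp hP₀irr
  convert hfin using 1
  rw [hP₀def]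
  simp only [Polynomial.map_add, Polynomial.map_sub, Polynomial.map_mul, Polynomial.map_pow,
    Polynomial.map_C, Polynomial.map_X]
  simp only [map_sub, map_add, map_pow, map_mul, RatFunc.algebraMap_X, RatFunc.algebraMap_C]
end

section
/- Let p be a prime, h ≥ 1, q = p^h, and let F be an algebraically closed field of characteristic p. Let a, b ∈ F with a^{q+1} + b^q + b ≠ 0. Suppose ξ, η, ζ ∈ F satisfy the two equations ξ^{q+1} + η^q·ξ^q + η·ξ − ((η·a − b)^q + (η·a − b)) = 0 and ζ^q + (ξ + η^q)·ζ^{q−1} + ξ^q + η = 0, and suppose ξ^{q²} ≠ ξ, ζ ≠ 0, and either ξ^q + η = 0 or ξ + η^q = 0. Then the two vectors (ξ^q + η, ξ − a, 0) and (ζ^{q−1}, 1, −ζ^{q−2}·(ξ + η^q)) in F³ are linearly independent over F (i.e. the Jacobian matrix of the two defining polynomials at (ξ, η, ζ) has rank 2, so (ξ, η, ζ) is a non-singular point of the space curve they define). -/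
theorem stmt_5 (p h q : ℕ) [Fact p.Prime] (hh : 0 < h) (hq : q = p ^ h)
    (F : Type) [Field F] [IsAlgClosed F] [CharP F p] (a b : F)
    (hab : a ^ (q + 1) + b ^ q + b ≠ 0)
    (ξ η ζ : F)
    (h1 : ξ ^ (q + 1) + η ^ q * ξ ^ q + η * ξ - ((η * a - b) ^ q + (η * a - b)) = 0)
    (h2 : ζ ^ q + (ξ + η ^ q) * ζ ^ (q - 1) + ξ ^ q + η = 0)
    (hξ : ξ ^ (q ^ 2) ≠ ξ) (hζ : ζ ≠ 0)
    (htan : ξ ^ q + η = 0 ∨ ξ + η ^ q = 0) :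
    LinearIndependent F
      ![![ξ ^ q + η, ξ - a, 0],
        ![ζ ^ (q - 1), 1, -ζ ^ (q - 2) * (ξ + η ^ q)]] := by
  have hp2 : 2 ≤ p := (Fact.out : p.Prime).two_le
  have hq2 : 2 ≤ q := by
    rw [hq]
    calc 2 ≤ p := hp2
    _ ≤ p ^ h := Nat.le_self_pow hh.ne' p
  have hchar : ∀ x y : F, (x - y) ^ q = x ^ q - y ^ q := by
    intro x y; rw [hq]; exact sub_pow_char_pow x y h
  have hneg : ∀ x : F, (-x) ^ q = -x ^ q := by
    intro x
    have := hchar 0 x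
    simpa [zero_pow (by omega : q ≠ 0)] using this
  -- expanded form of h1
  have hexp : (η * a - b) ^ q = η ^ q * a ^ q - b ^ q := by rw [hchar, mul_pow]
  rw [pow_succ] at h1
  have h1' : ξ ^ q * ξ + η ^ q * ξ ^ q + η * ξ - (η ^ q * a ^ q - b ^ q + (η * a - b)) = 0 := by
    linear_combination h1 + hexp
  have hζq1 : ζ ^ (q - 1) ≠ 0 := pow_ne_zero _ hζ
  have hζpow : ζ ^ q = ζ ^ (q - 1) * ζ := by
    conv_lhs => rw [show q = (q - 1) + 1 by omega]
    rw [pow_succ]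
  -- ξ ≠ a
  have hξa : ξ - a ≠ 0 := by
    intro hc
    apply hab
    have hxa : ξ = a := by linear_combination hc
    rw [hxa] at h1'
    rw [pow_succ]
    linear_combination h1'
  rw [LinearIndependent.pair_iff]
  intro s t hst
  have h0 := congrFun hst 0
  have hcomp1 := congrFun hst 1
  simp only [Matrix.smul_cons, smul_eq_mul, Matrix.smul_empty, Matrix.add_cons,
    Matrix.head_cons, Matrix.tail_cons, Matrix.empty_add_empty, Matrix.cons_val_zero,
    Matrix.cons_val_one, Pi.add_apply, Pi.smul_apply, Pi.zero_apply] at h0 hcomp1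
  -- h0 : s * (ξ ^ q + η) + t * ζ ^ (q - 1) = 0
  -- hcomp1 : s * (ξ - a) + t * 1 = 0
  rcases htan with hA | hB
  · -- ξ ^ q + η = 0
    have ht : t = 0 := by
      rw [hA] at h0
      have : t * ζ ^ (q - 1) = 0 := by linear_combination h0
      rcases mul_eq_zero.mp this with h | h
      · exact h
      · exact absurd h hζq1
    have hs : s = 0 := by
      rw [ht] at hcomp1
      have : s * (ξ - a) = 0 := by linear_combination hcomp1
      rcases mul_eq_zero.mp this with h | h
      · exact h
      · exact absurd h hξa
    exact ⟨hs, ht⟩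
  · -- ξ + η ^ q = 0
    have h2' : ζ ^ q + ξ ^ q + η = 0 := by
      linear_combination h2 - ζ ^ (q - 1) * hB
    have hkey : ζ + ξ - a ≠ 0 := by
      intro hc
      apply hab
      have hζv : ζ = a - ξ := by linear_combination hc
      rw [hζv, hchar a ξ] at h2'
      have hη : η = -a ^ q := by linear_combination h2'
      have hξv : ξ = (a ^ q) ^ q := by
        rw [hη] at hB
        rw [hneg] at hB
        linear_combination hB
      rw [hη, hξv] at h1'
      rw [hneg] at h1'
      rw [pow_succ]
      linear_combination h1'
    have hs : s = 0 := by
      have ht' : t = -(s * (ξ - a)) := by linear_combination hcomp1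
      rw [ht'] at h0
      have hxqη : ξ ^ q + η = -(ζ ^ (q - 1) * ζ) := by
        rw [← hζpow]; linear_combination h2'
      rw [hxqη] at h0
      have : s * (ζ ^ (q - 1) * (ζ + ξ - a)) = 0 := by linear_combination -h0
      rcases mul_eq_zero.mp this with h | h
      · exact h
      · rcases mul_eq_zero.mp h with h' | h'
        · exact absurd h' hζq1
        · exact absurd h' hkey
    have ht : t = 0 := by
      rw [hs] at hcomp1
      linear_combination hcomp1
    exact ⟨hs, ht⟩
end

section
/- Let p be a prime, h ≥ 1, q = p^h, F an algebraically closed field of characteristic p, and K = F(m) the rational function field over F. Then for every a ∈ F, the polynomial g(T) = T^q + (a + m^q)·T^{q−1} + (m + a^q) is irreducible in K[T]. -/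
set_option maxHeartbeats 2000000

open Polynomial


theorem prime_algebraMap_of_prime {R A : Type*} [CommRing R] [IsDomain R] [CommRing A]
    [Algebra R A] (S : Submonoid R) [IsLocalization S A] {p : R} (hp : Prime p)
    (hS : ∀ s ∈ S, ¬ p ∣ s) : Prime (algebraMap R A p) := by
  have hle : S ≤ nonZeroDivisors R := by
    intro s hs
    refine mem_nonZeroDivisors_of_ne_zero ?_
    rintro rfl
    exact hS 0 hs (dvd_zero p)
  have inj : Function.Injective (algebraMap R A) := IsLocalization.injective A hle
  set ι := algebraMap R A with hι
  refine ⟨?_, ?_, ?_⟩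
  · intro h0
    exact hp.ne_zero (inj (by rw [h0, map_zero]))
  · intro hu
    obtain ⟨u, hu⟩ := hu
    have h1 : ι p * (↑u⁻¹ : A) = 1 := by rw [← hu]; exact u.mul_inv
    obtain ⟨⟨c, s⟩, hcs⟩ := IsLocalization.surj S (↑u⁻¹ : A)
    have : ι (p * c) = ι s := by
      rw [map_mul]
      calc ι p * ι c = ι p * ((↑u⁻¹ : A) * ι s) := by rw [hcs]
        _ = (ι p * (↑u⁻¹ : A)) * ι s := by ring
        _ = ι s := by rw [h1, one_mul]
    exact hS s s.2 ⟨c, (inj this).symm⟩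
  · intro x y hxy
    obtain ⟨z, hz⟩ := hxy
    obtain ⟨⟨xa, xs⟩, hx⟩ := IsLocalization.surj S x
    obtain ⟨⟨ya, ys⟩, hy⟩ := IsLocalization.surj S y
    obtain ⟨⟨za, zs⟩, hzz⟩ := IsLocalization.surj S z
    have key : ι (p * za * xs * ys) = ι (xa * ya * zs) := by
      push_cast [map_mul]
      calc ι p * ι za * ι xs * ι ys
          = (ι p * z) * ι zs * ι xs * ι ys := by rw [← hzz]; ring
        _ = (x * ι xs) * (y * ι ys) * ι zs := by rw [← hz]; ring
        _ = ι xa * ι ya * ι zs := by rw [hx, hy]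
    have hdvd : p ∣ xa * ya * zs := ⟨za * xs * ys, by have := inj key; linear_combination -this⟩
    have : p ∣ xa * ya := by
      rcases hp.dvd_or_dvd hdvd with h | h
      · exact h
      · exact absurd h (hS zs zs.2)
    rcases hp.dvd_or_dvd this with h | h
    · left
      obtain ⟨w, hw⟩ := h
      have hsu : IsUnit (ι xs) := IsLocalization.map_units A xs
      obtain ⟨v, hv⟩ := hsu
      refine ⟨ι w * (↑v⁻¹ : A), ?_⟩
      have : x * ι xs = ι p * ι w := by rw [hx, hw, map_mul]
      calc x = x * (ι xs * ↑v⁻¹) := by rw [← hv, v.mul_inv, mul_one]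
        _ = (x * ι xs) * ↑v⁻¹ := by ring
        _ = ι p * (ι w * ↑v⁻¹) := by rw [this]; ring
    · right
      obtain ⟨w, hw⟩ := h
      have hsu : IsUnit (ι ys) := IsLocalization.map_units A ys
      obtain ⟨v, hv⟩ := hsu
      refine ⟨ι w * (↑v⁻¹ : A), ?_⟩
      have : y * ι ys = ι p * ι w := by rw [hy, hw, map_mul]
      calc y = y * (ι ys * ↑v⁻¹) := by rw [← hv, v.mul_inv, mul_one]
        _ = (y * ι ys) * ↑v⁻¹ := by ring
        _ = ι p * (ι w * ↑v⁻¹) := by rw [this]; ring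


section aux

variable {F : Type} [Field F]


theorem aux_H_coeff (a : F) (n : ℕ) (k : ℕ) :
    (C (1 + C a * X + C (a ^ (n + 2)) * X ^ (n + 2)) * X ^ (n + 2)
      + C ((X : F[X]) ^ (n + 2)) * X ^ (n + 1) + C (X : F[X])).coeff k
    = if k = n + 2 then (1 + C a * X + C (a ^ (n + 2)) * X ^ (n + 2)) else
      if k = n + 1 then (X : F[X]) ^ (n + 2) else if k = 0 then (X : F[X]) else 0 := by
  simp only [coeff_add, coeff_C_mul, coeff_X_pow, coeff_C]
  split_ifs <;> simp_all <;> omega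

theorem aux_u_ne (a : F) (n : ℕ) :
    (1 + C a * X + C (a ^ (n + 2)) * X ^ (n + 2) : F[X]) ≠ 0 := by
  intro h
  have h0 := congrArg (fun f => coeff f 0) h
  simp [coeff_one, coeff_X, coeff_X_pow] at h0

theorem aux_H_natDegree (a : F) (n : ℕ) :
    (C (1 + C a * X + C (a ^ (n + 2)) * X ^ (n + 2)) * X ^ (n + 2)
      + C ((X : F[X]) ^ (n + 2)) * X ^ (n + 1) + C (X : F[X])).natDegree = n + 2 := by
  compute_degree!
  simpa [map_pow] using aux_u_ne a n

theorem aux_H_irred (a : F) (n : ℕ) :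
    Irreducible (C (1 + C a * X + C (a ^ (n + 2)) * X ^ (n + 2)) * X ^ (n + 2)
      + C ((X : F[X]) ^ (n + 2)) * X ^ (n + 1) + C (X : F[X])) := by
  set u : F[X] := 1 + C a * X + C (a ^ (n + 2)) * X ^ (n + 2) with hu
  set Hp : F[X][X] := C u * X ^ (n + 2) + C ((X : F[X]) ^ (n + 2)) * X ^ (n + 1) + C (X : F[X])
    with hH
  have hdeg : Hp.natDegree = n + 2 := aux_H_natDegree a n
  have hXdvdu : ¬ (X : F[X]) ∣ u := by
    rw [X_dvd_iff]
    simp [hu, coeff_one, coeff_X, coeff_X_pow]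
  apply irreducible_of_eisenstein_criterion (P := Ideal.span {(X : F[X])})
  · exact (Ideal.span_singleton_prime X_ne_zero).mpr prime_X
  · rw [leadingCoeff, hdeg, aux_H_coeff a n]
    simp only [if_pos rfl]
    rw [Ideal.mem_span_singleton]
    exact hXdvdu
  · intro k hk
    rw [degree_eq_natDegree (fun h0 => by simp [h0] at hdeg), hdeg] at hk
    have hk' : k < n + 2 := by exact_mod_cast hk
    rw [aux_H_coeff a n, if_neg (by omega)]
    split_ifs with h1 h2
    · exact Ideal.mem_span_singleton.mpr (dvd_pow_self _ (by omega))
    · exact Ideal.mem_span_singleton.mpr dvd_rfl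
    · exact Ideal.zero_mem _
  · rw [degree_eq_natDegree (fun h0 => by simp [h0] at hdeg), hdeg]
    exact_mod_cast Nat.succ_pos _
  · rw [aux_H_coeff a n, if_neg (by omega), if_neg (by omega), if_pos rfl,
      Ideal.span_singleton_pow, Ideal.mem_span_singleton]
    intro hdvd
    have := natDegree_le_of_dvd hdvd X_ne_zero
    simp [natDegree_X_pow, natDegree_X] at this
  · intro r hr
    have hr0 : r ∣ (X : F[X]) := by
      have := (C_dvd_iff_dvd_coeff r _).mp hr 0
      rwa [aux_H_coeff a n, if_neg (by omega), if_neg (by omega), if_pos rfl] at this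
    have hrt : r ∣ u := by
      have := (C_dvd_iff_dvd_coeff r _).mp hr (n + 2)
      rwa [aux_H_coeff a n, if_pos rfl] at this
    obtain ⟨v, hv⟩ := hr0
    rcases (irreducible_X (R := F)).isUnit_or_isUnit hv with h | h
    · exact h
    · exfalso
      apply hXdvdu
      obtain ⟨w, hw⟩ := h.exists_left_inv
      exact Dvd.dvd.trans ⟨w, by rw [hv]; ring_nf; rw [mul_assoc, mul_comm v w, hw, mul_one]⟩ hrt


theorem aux_G_irred (a : F) (n : ℕ) :
    Irreducible ((X ^ (n + 2) + C (Polynomial.C a + X ^ (n + 2)) * X ^ (n + 1)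
      + C (X + Polynomial.C (a ^ (n + 2)))) : Polynomial (Polynomial F)) := by
  have hHirr := aux_H_irred a n
  have hHdeg := aux_H_natDegree a n
  set u : F[X] := 1 + C a * X + C (a ^ (n + 2)) * X ^ (n + 2) with hu
  set Hp : F[X][X] := C u * X ^ (n + 2) + C ((X : F[X]) ^ (n + 2)) * X ^ (n + 1) + C (X : F[X])
    with hH
  set G : F[X][X] := X ^ (n + 2) + C (Polynomial.C a + X ^ (n + 2)) * X ^ (n + 1)
      + C (X + Polynomial.C (a ^ (n + 2))) with hG
  have hHprime : Prime Hp := UniqueFactorizationMonoid.irreducible_iff_prime.mp hHirr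
  set d : F[X][X] := X * C X with hd
  set A := Localization.Away d with hA
  set ι := algebraMap F[X][X] A with hι
  -- units
  have hdu : IsUnit (ι d) := IsLocalization.map_units A ⟨d, Submonoid.mem_powers d⟩
  have hOu : IsUnit (ι X) := isUnit_of_mul_isUnit_left (by rwa [← map_mul, ← hd])
  have hIu : IsUnit (ι (C X)) := isUnit_of_mul_isUnit_right (by rwa [← map_mul, ← hd])
  set O : A := ι X with hO
  set I : A := ι (C X) with hI
  set O' : A := ↑hOu.unit⁻¹ with hO'
  set I' : A := ↑hIu.unit⁻¹ with hI'
  have hOO' : O * O' = 1 := hOu.mul_val_inv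
  have hII' : I * I' = 1 := hIu.mul_val_inv
  -- the twisted map
  set β : F[X] →+* A :=
    eval₂RingHom (ι.comp ((C : F[X] →+* F[X][X]).comp (C : F →+* F[X]))) O' with hβ
  set σ₀ : F[X][X] →+* A := eval₂RingHom β I' with hσ₀
  have hσ₀C : ∀ r : F[X], σ₀ (C r) = β r := fun r => eval₂_C _ _
  have hσ₀X : σ₀ X = I' := eval₂_X _ _
  have hβC : ∀ c : F, β (Polynomial.C c) = ι (C (Polynomial.C c)) := fun c => eval₂_C _ _
  have hβX : β X = O' := eval₂_X _ _
  -- sigma_0 is unit on powers of d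
  have hunit : ∀ y : Submonoid.powers d, IsUnit (σ₀ y) := by
    rintro ⟨y, k, rfl⟩
    simp only [map_pow]
    refine IsUnit.pow _ ?_
    have hσd : σ₀ d = I' * O' := by
      show σ₀ (X * C X) = I' * O'
      rw [map_mul, hσ₀X, hσ₀C, hβX]
    rw [hσd]
    exact (hIu.unit⁻¹.isUnit).mul (hOu.unit⁻¹.isUnit)
  set σ : A →+* A := IsLocalization.lift (S := A) (M := Submonoid.powers d) hunit with hσ
  have hσι : ∀ r : F[X][X], σ (ι r) = σ₀ r := fun r => IsLocalization.lift_eq hunit r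
  set al : A := ι (C (Polynomial.C a)) with hal
  have hON : ∀ k : ℕ, O ^ k * O' ^ k = 1 := fun k => by rw [← mul_pow, hOO', one_pow]
  have hIN : ∀ k : ℕ, I ^ k * I' ^ k = 1 := fun k => by rw [← mul_pow, hII', one_pow]
  have hβu : β u = 1 + al * O' + al ^ (n + 2) * O' ^ (n + 2) := by
    rw [hu, show (Polynomial.C (a ^ (n + 2)) : F[X]) = (Polynomial.C a) ^ (n + 2) from map_pow _ _ _]
    simp only [map_add, map_mul, map_pow, map_one, hβX, hβC]
    rfl
  have hσH : σ₀ Hp = β u * I' ^ (n + 2) + O' ^ (n + 2) * I' ^ (n + 1) + O' := by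
    show σ₀ (C u * X ^ (n + 2) + C ((X : F[X]) ^ (n + 2)) * X ^ (n + 1) + C (X : F[X])) = _
    rw [show (C ((X : F[X]) ^ (n + 2)) : F[X][X]) = (C (X : F[X])) ^ (n + 2) from map_pow _ _ _]
    simp only [map_add, map_mul, map_pow, hσ₀C, hσ₀X, hβX]
  have hιG : ι G = O ^ (n + 2) + (al + I ^ (n + 2)) * O ^ (n + 1) + (I + al ^ (n + 2)) := by
    show ι (X ^ (n + 2) + C (Polynomial.C a + X ^ (n + 2)) * X ^ (n + 1)
      + C (X + Polynomial.C (a ^ (n + 2)))) = _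
    rw [show (Polynomial.C (a ^ (n + 2)) : F[X]) = (Polynomial.C a) ^ (n + 2) from map_pow _ _ _]
    simp only [map_add, map_mul, map_pow, C_add]
    rfl
  have key : ι G = O ^ (n + 2) * I ^ (n + 2) * σ₀ Hp := by
    rw [hιG, hσH, hβu]
    linear_combination -((O ^ (n + 2) + al * O ^ (n + 1) + al ^ (n + 2)) * hIN (n + 2) +
      (al * O ^ (n + 1) * I ^ (n + 2) * I' ^ (n + 2) + O ^ (n + 1) * I ^ (n + 2)) * hOO' +
      (al ^ (n + 2) * I ^ (n + 2) * I' ^ (n + 2) + I) * hON (n + 2) +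
      I * O ^ (n + 2) * O' ^ (n + 2) * hIN (n + 1))
  -- Prime (ι Hp)
  have hCXne : (C (X : F[X]) : F[X][X]) ≠ 0 := fun hc => X_ne_zero (by
    rwa [C_eq_zero] at hc)
  have hSdvd : ∀ s ∈ Submonoid.powers d, ¬ Hp ∣ s := by
    rintro s ⟨k, rfl⟩ hdvd
    have h1 : Hp ∣ d := hHprime.dvd_of_dvd_pow hdvd
    rcases hHprime.2.2 _ _ h1 with hh | hh
    · have := natDegree_le_of_dvd hh X_ne_zero
      rw [hHdeg, natDegree_X] at this; omega
    · have := natDegree_le_of_dvd hh hCXne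
      rw [hHdeg, natDegree_C] at this; omega
  have hprimeA : Prime (ι Hp) := prime_algebraMap_of_prime (Submonoid.powers d) hHprime hSdvd
  -- involution
  have hinv : σ.comp σ = RingHom.id A := by
    apply IsLocalization.ringHom_ext (Submonoid.powers d)
    apply Polynomial.ringHom_ext'
    · apply Polynomial.ringHom_ext'
      · ext c
        simp only [RingHom.comp_apply, RingHom.id_apply, RingHom.coe_comp, Function.comp_apply]
        rw [show (algebraMap F[X][X] A) (C (Polynomial.C c)) = ι (C (Polynomial.C c)) from rfl,
          hσι, hσ₀C, hβC, hσι, hσ₀C, hβC]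
      · simp only [RingHom.comp_apply, RingHom.id_apply, RingHom.coe_comp, Function.comp_apply]
        rw [show (algebraMap F[X][X] A) (C X) = I from rfl, hσι]
        rw [show σ₀ (C X) = O' from by rw [hσ₀C, hβX]]
        have h1 : σ O * σ O' = 1 := by rw [← map_mul, hOO', map_one]
        have h2 : σ O = I' := by rw [hO, hσι, hσ₀X]
        have h3 : I' * σ O' = 1 := by rw [← h2]; exact h1
        have h4 : IsUnit I' := hIu.unit⁻¹.isUnit
        apply h4.mul_left_cancel
        rw [h3, mul_comm I' I, hII']
    · simp only [RingHom.comp_apply, RingHom.id_apply]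
      rw [show (algebraMap F[X][X] A) (X : F[X][X]) = O from rfl, hσι, hσ₀X]
      have h1 : σ I * σ I' = 1 := by rw [← map_mul, hII', map_one]
      have h2 : σ I = O' := by rw [hI, hσι, hσ₀C, hβX]
      have h3 : O' * σ I' = 1 := by rw [← h2]; exact h1
      have h4 : IsUnit O' := hOu.unit⁻¹.isUnit
      apply h4.mul_left_cancel
      rw [h3, mul_comm O' O, hOO']
  have hσσ : ∀ x : A, σ (σ x) = x := fun x => RingHom.congr_fun hinv x
  have hprimeσH : Prime (σ₀ Hp) := by
    rw [← hσι]
    refine comap_prime σ σ hσσ ?_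
    rw [hσσ]
    exact hprimeA
  -- Prime (ι G)
  have hGprimeA : Prime (ι G) := by
    have hNu : IsUnit (O ^ (n + 2) * I ^ (n + 2)) := (hOu.pow _).mul (hIu.pow _)
    have hAssoc : Associated (σ₀ Hp) (ι G) := ⟨hNu.unit, by rw [hNu.unit_spec, key]; ring⟩
    exact hAssoc.prime hprimeσH
  -- descent
  haveI : IsDomain A := IsLocalization.isDomain_of_le_nonZeroDivisors (S := A)
    (powers_le_nonZeroDivisors_of_noZeroDivisors
      (mul_ne_zero X_ne_zero hCXne))
  have hGco : ∀ k, G.coeff k = if k = n + 2 then 1 else if k = n + 1 then (Polynomial.C a + X ^ (n + 2))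
      else if k = 0 then ((X : F[X]) + Polynomial.C (a ^ (n + 2))) else 0 := by
    intro k
    rw [hG]
    simp only [coeff_add, coeff_C_mul, coeff_X_pow, coeff_C]
    split_ifs <;> simp_all <;> omega
  have hGcoeff0 : G.coeff 0 = X + Polynomial.C (a ^ (n + 2)) := by
    rw [hGco 0, if_neg (by omega), if_neg (by omega), if_pos rfl]
  have hGcoefftop : G.coeff (n + 2) = 1 := by
    rw [hGco (n + 2), if_pos rfl]
  have hGdeg : G.natDegree = n + 2 := by rw [hG]; compute_degree!
  have hGne : G ≠ 0 := fun h0 => by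
    rw [h0, coeff_zero] at hGcoefftop
    exact one_ne_zero hGcoefftop.symm
  have hXndvdG : ¬ (X : F[X][X]) ∣ G := by
    rw [X_dvd_iff, hGcoeff0]
    intro hc
    have h7 : (X : F[X]) = - Polynomial.C (a ^ (n + 2)) := eq_neg_of_add_eq_zero_left hc
    have h8 := congrArg natDegree h7
    rw [natDegree_X, natDegree_neg, natDegree_C] at h8
    omega
  have hCXndvdG : ¬ (C (X : F[X]) : F[X][X]) ∣ G := by
    intro hc
    have h7 := (C_dvd_iff_dvd_coeff _ _).mp hc (n + 2)
    rw [hGcoefftop] at h7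
    exact not_isUnit_X (isUnit_of_dvd_one h7)
  have hdne : d ≠ 0 := mul_ne_zero X_ne_zero hCXne
  have hinj : Function.Injective ι :=
    IsLocalization.injective A (powers_le_nonZeroDivisors_of_noZeroDivisors hdne)
  have claim : ∀ b : F[X][X], b ∣ G → IsUnit (ι b) → IsUnit b := by
    intro b hbG hbu
    obtain ⟨v, hv⟩ := hbu
    obtain ⟨⟨c₀, s⟩, hcs⟩ := IsLocalization.surj (Submonoid.powers d) ((↑v⁻¹ : A))
    obtain ⟨k, hk⟩ := s.2
    have h5 : ι b * ι c₀ = ι ↑s := by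
      calc ι b * ι c₀ = ι b * ((↑v⁻¹ : A) * ι ↑s) := by rw [hcs]
        _ = (ι b * ↑v⁻¹) * ι ↑s := by ring
        _ = ι ↑s := by rw [← hv, v.mul_inv, one_mul]
    have h6 : b * c₀ = d ^ k := hinj (by rw [map_mul, h5, ← hk])
    have hbd : b ∣ d ^ k := ⟨c₀, h6.symm⟩
    by_contra hbnu
    have hbne : b ≠ 0 := fun h0 => hGne (by
      obtain ⟨c', hc'⟩ := hbG
      rw [hc', h0, zero_mul])
    obtain ⟨w, hwirr, hwb⟩ := WfDvdMonoid.exists_irreducible_factor hbnu hbne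
    have hwprime : Prime w := UniqueFactorizationMonoid.irreducible_iff_prime.mp hwirr
    have hwd : w ∣ d := hwprime.dvd_of_dvd_pow (hwb.trans hbd)
    have hwG : w ∣ G := hwb.trans hbG
    rcases hwprime.2.2 _ _ hwd with hw | hw
    · obtain ⟨t, ht⟩ := hw
      rcases irreducible_X.isUnit_or_isUnit ht with h | h
      · exact hwirr.1 h
      · obtain ⟨t', ht'⟩ := h.exists_right_inv
        apply hXndvdG
        refine Dvd.dvd.trans ⟨t', ?_⟩ hwG
        rw [ht, mul_assoc, ht', mul_one]
    · have hwdeg : w.natDegree = 0 := Nat.le_zero.mp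
        (by simpa [natDegree_C] using natDegree_le_of_dvd hw hCXne)
      obtain ⟨w0, hw0⟩ := natDegree_eq_zero.mp hwdeg
      obtain ⟨t, ht⟩ := hw
      rw [← hw0] at ht
      have h8 : (X : F[X]) = w0 * t.coeff 0 := by
        have h7 := congrArg (fun q => Polynomial.coeff q 0) ht
        simpa [coeff_C_mul, coeff_C] using h7
      have hw0nu : ¬ IsUnit w0 := fun h => hwirr.1 (hw0 ▸ (isUnit_C.mpr h))
      rcases irreducible_X.isUnit_or_isUnit h8 with h | h
      · exact hw0nu h
      · obtain ⟨t', ht'⟩ := h.exists_right_inv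
        apply hCXndvdG
        refine Dvd.dvd.trans ?_ hwG
        refine ⟨C t', ?_⟩
        rw [← hw0, ← C_mul]
        congr 1
        rw [h8, mul_assoc, ht', mul_one]
  constructor
  · intro hGu
    have := natDegree_eq_zero_of_isUnit hGu
    omega
  · intro b c hbc
    have hbcA : ι G = ι b * ι c := by rw [hbc, map_mul]
    rcases hGprimeA.irreducible.isUnit_or_isUnit hbcA with h | h
    · exact Or.inl (claim b ⟨c, hbc⟩ h)
    · exact Or.inr (claim c ⟨b, by rw [hbc, mul_comm]⟩ h)


end aux

theorem stmt_6 (p h q : ℕ) [Fact p.Prime] (hh : 0 < h) (hq : q = p ^ h)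
    (F : Type) [Field F] [IsAlgClosed F] [CharP F p] (a : F) :
    Irreducible
      ((X ^ q + C (RatFunc.C a + RatFunc.X ^ q) * X ^ (q - 1)
          + C (RatFunc.X + RatFunc.C (a ^ q))) : Polynomial (RatFunc F)) := by
  have hq2 : 2 ≤ q := by
    have hp2 : 2 ≤ p := (Fact.out (p := p.Prime)).two_le
    calc 2 ≤ p := hp2
      _ ≤ p ^ h := Nat.le_self_pow (by omega) p
      _ = q := hq.symm
  obtain ⟨n, rfl⟩ : ∃ n, q = n + 2 := ⟨q - 2, by omega⟩
  have hn1 : n + 2 - 1 = n + 1 := rfl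
  rw [hn1]
  set G : F[X][X] := X ^ (n + 2) + C (Polynomial.C a + X ^ (n + 2)) * X ^ (n + 1)
      + C (X + Polynomial.C (a ^ (n + 2))) with hG
  have hGirr : Irreducible G := aux_G_irred a n
  have hGmonic : G.Monic := by
    have h1 : G.natDegree = n + 2 := by rw [hG]; compute_degree!
    rw [Monic.def, Polynomial.leadingCoeff, h1, hG]
    simp only [coeff_add, coeff_C_mul, coeff_X_pow, coeff_C]
    rw [if_pos trivial, if_neg (by omega), if_neg (by omega)]
    ring
  have hmain := (hGmonic.irreducible_iff_irreducible_map_fraction_map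
    (K := RatFunc F)).mp hGirr
  have hmapeq : (X ^ (n + 2) + C (RatFunc.C a + RatFunc.X ^ (n + 2)) * X ^ (n + 1)
      + C (RatFunc.X + RatFunc.C (a ^ (n + 2))) : Polynomial (RatFunc F)) =
      G.map (algebraMap F[X] (RatFunc F)) := by
    rw [hG]
    simp only [Polynomial.map_add, Polynomial.map_mul, Polynomial.map_pow,
      Polynomial.map_X, Polynomial.map_C, map_add, map_pow,
      RatFunc.algebraMap_C, RatFunc.algebraMap_X]
  rw [hmapeq]
  exact hmain
end

section
/- Let q be a prime power, r ≥ 2, and let F = GF(q^{2r}) be the field with q^{2r} elements. Let Ω be the set of points [x : y : z] of the projective plane PG(2,F) satisfying x^{q+1} + y^q·z + y·z^q = 0. Then every line of PG(2,F) contains exactly 0, 1, 2, or q+1 points of Ω, and at least one line contains exactly q+1 points of Ω. -/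
namespace Stmt13

open Projectivization Module

variable {F : Type} [Field F]

/-- The Hermitian-type form value. -/
def phi (q : ℕ) (v : Fin 3 → F) : F := v 0 ^ (q+1) + v 1 ^ q * v 2 + v 1 * v 2 ^ q

/-- The sesquilinear pairing. -/
def hpair (q : ℕ) (e f : Fin 3 → F) : F := e 0 ^ q * f 0 + e 1 ^ q * f 2 + e 2 ^ q * f 1

lemma phi_smul (q : ℕ) (c : F) (v : Fin 3 → F) : phi q (c • v) = c ^ (q+1) * phi q v := by
  simp only [phi, Pi.smul_apply, smul_eq_mul, mul_pow]
  ring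

lemma phi_add_smul (q : ℕ) (hfrob : ∀ a b : F, (a + b) ^ q = a ^ q + b ^ q)
    (e f : Fin 3 → F) (t : F) :
    phi q (e + t • f) =
      phi q e + hpair q e f * t + hpair q f e * t ^ q + phi q f * t ^ (q+1) := by
  have h0 : (e 0 + t * f 0) ^ q = e 0 ^ q + t ^ q * f 0 ^ q := by rw [hfrob, mul_pow]
  have h1 : (e 1 + t * f 1) ^ q = e 1 ^ q + t ^ q * f 1 ^ q := by rw [hfrob, mul_pow]
  have h2 : (e 2 + t * f 2) ^ q = e 2 ^ q + t ^ q * f 2 ^ q := by rw [hfrob, mul_pow]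
  simp only [phi, hpair, Pi.add_apply, Pi.smul_apply, smul_eq_mul, pow_succ, h0, h1, h2]
  ring

/-- The main counting lemma: on the line spanned by two distinct curve points `e`, `f`,
the curve points are `mk f` together with `mk (e + t • f)` for roots `t`. -/
lemma count [Fintype F] (q : ℕ) (hfrob : ∀ a b : F, (a + b) ^ q = a ^ q + b ^ q)
    (e f : Fin 3 → F) (hind : LinearIndependent F ![e, f])
    (he : phi q e = 0) (hf0 : phi q f = 0) :
    {P : Projectivization F (Fin 3 → F) | phi q P.rep = 0 ∧
        P.rep ∈ Submodule.span F ({e, f} : Set (Fin 3 → F))}.ncard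
      = 1 + {t : F | hpair q e f * t + hpair q f e * t ^ q = 0}.ncard := by
  classical
  have hpr := LinearIndependent.pair_iff.mp hind
  have hene : e ≠ 0 := fun h => one_ne_zero (hpr 1 0 (by simp [h])).1
  have hfne : f ≠ 0 := fun h => one_ne_zero (hpr 0 1 (by simp [h])).2
  have hvne : ∀ t : F, e + t • f ≠ 0 := by
    intro t h
    exact one_ne_zero (hpr 1 t (by rw [one_smul]; exact h)).1
  set ℓ : Submodule F (Fin 3 → F) := Submodule.span F ({e, f} : Set (Fin 3 → F)) with hℓ
  have heℓ : e ∈ ℓ := Submodule.subset_span (by simp)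
  have hfℓ : f ∈ ℓ := Submodule.subset_span (by simp)
  have hrep : ∀ (v : Fin 3 → F) (hv : v ≠ 0), ∃ a : Fˣ,
      (Projectivization.mk F v hv).rep = (a : F) • v := by
    intro v hv
    obtain ⟨a, ha⟩ := Projectivization.exists_smul_eq_mk_rep F v hv
    exact ⟨a, by rw [← ha, Units.smul_def]⟩
  have hT : {P : Projectivization F (Fin 3 → F) | phi q P.rep = 0 ∧ P.rep ∈ ℓ}
      = insert (Projectivization.mk F f hfne)
          ((fun t => Projectivization.mk F (e + t • f) (hvne t)) ''
            {t : F | hpair q e f * t + hpair q f e * t ^ q = 0}) := by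
    ext P
    simp only [Set.mem_setOf_eq, Set.mem_insert_iff, Set.mem_image]
    constructor
    · rintro ⟨h1, h2⟩
      obtain ⟨a, b, hab⟩ := Submodule.mem_span_pair.mp h2
      by_cases ha : a = 0
      · left
        subst ha; rw [zero_smul, zero_add] at hab
        have hb : b ≠ 0 := by rintro rfl; rw [zero_smul] at hab; exact P.rep_nonzero hab.symm
        rw [← Projectivization.mk_rep P]
        exact (Projectivization.mk_eq_mk_iff F _ _ _ hfne).mpr
          ⟨Units.mk0 b hb, by simp only [Units.smul_def, Units.val_mk0]; exact hab⟩
      · right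
        have hv : a • (e + (a⁻¹ * b) • f) = P.rep := by
          rw [smul_add, smul_smul, ← mul_assoc, mul_inv_cancel₀ ha, one_mul]
          exact hab
        refine ⟨a⁻¹ * b, ?_, ?_⟩
        · have h0 : phi q (a • (e + (a⁻¹ * b) • f)) = 0 := by rw [hv]; exact h1
          rw [phi_smul] at h0
          have h3 : phi q (e + (a⁻¹ * b) • f) = 0 :=
            (mul_eq_zero.mp h0).resolve_left (pow_ne_zero _ ha)
          rw [phi_add_smul q hfrob, he, hf0] at h3
          show hpair q e f * (a⁻¹ * b) + hpair q f e * (a⁻¹ * b) ^ q = 0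
          linear_combination h3
        · rw [← Projectivization.mk_rep P]
          exact (Projectivization.mk_eq_mk_iff F _ _ _ _).mpr
            ⟨(Units.mk0 a ha)⁻¹, by
              rw [Units.smul_def, ← hv]
              simp only [Units.val_inv_eq_inv_val, Units.val_mk0]
              rw [inv_smul_smul₀ ha]⟩
    · rintro (rfl | ⟨t, ht, rfl⟩)
      · obtain ⟨a, ha⟩ := hrep f hfne
        refine ⟨by rw [ha, phi_smul, hf0, mul_zero], ?_⟩
        rw [ha]; exact ℓ.smul_mem _ hfℓ
      · obtain ⟨a, ha⟩ := hrep _ (hvne t)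
        replace ht : hpair q e f * t + hpair q f e * t ^ q = 0 := ht
        refine ⟨?_, ?_⟩
        · rw [ha, phi_smul, phi_add_smul q hfrob, he, hf0, zero_add, zero_mul, add_zero,
            ht, mul_zero]
        · rw [ha]
          exact ℓ.smul_mem _ (Submodule.add_mem _ heℓ (ℓ.smul_mem _ hfℓ))
  rw [hT, Set.ncard_insert_of_notMem ?notmem, Set.ncard_image_of_injOn ?inj, add_comm]
  case notmem =>
    rintro ⟨t, ht, hEq⟩
    obtain ⟨u, hu⟩ := (Projectivization.mk_eq_mk_iff F _ _ _ _).mp hEq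
    rw [Units.smul_def] at hu
    have h0 : (1 : F) • e + (t - (u : F)) • f = 0 := by
      rw [one_smul, sub_smul, ← add_sub_assoc, ← hu, sub_self]
    exact one_ne_zero (hpr 1 (t - (u : F)) h0).1
  case inj =>
    intro s hs t ht hEq
    obtain ⟨u, hu⟩ := (Projectivization.mk_eq_mk_iff F _ _ _ _).mp hEq
    rw [Units.smul_def, smul_add, smul_smul] at hu
    have h0 : ((u : F) - 1) • e + ((u : F) * t - s) • f = 0 := by
      rw [sub_smul, sub_smul, one_smul]
      have harr : ((u:F) • e - e) + (((u:F) * t) • f - s • f)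
          = ((u:F) • e + ((u:F) * t) • f) - (e + s • f) := by abel
      rw [harr, hu, sub_self]
    have h2 := hpr _ _ h0
    have hu1 : (u : F) = 1 := sub_eq_zero.mp h2.1
    have := h2.2
    rw [hu1, one_mul] at this
    exact (sub_eq_zero.mp this).symm


lemma charP_of_card (p k q r : ℕ) [Fact p.Prime] (hk : 0 < k) (hq : q = p ^ k) (hr : 1 ≤ r)
    [Fintype F] (hF : Fintype.card F = q ^ (2 * r)) : CharP F p := by
  set p' := ringChar F with hp'
  haveI : CharP F p' := ringChar.charP F
  have hp'prime : p'.Prime := CharP.char_is_prime F p'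
  obtain ⟨n, hnp, hn⟩ := FiniteField.card F p'
  have hdvd : p' ∣ p := by
    have h1 : p' ∣ p' ^ (n : ℕ) := dvd_pow_self _ n.ne_zero
    rw [hn] at hF
    rw [hF, hq, ← pow_mul] at h1
    exact hp'prime.dvd_of_dvd_pow h1
  have : p' = p := (Nat.prime_dvd_prime_iff_eq hp'prime Fact.out).mp hdvd
  rw [← this]
  infer_instance

lemma pow_eq_card [Fintype F] (n : ℕ) (hn : n ≠ 0) (hdvd : n ∣ Fintype.card F - 1)
    (c : F) (hc : c ≠ 0) (t₀ : F) (ht₀ : t₀ ^ n = c) :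
    {t : F | t ^ n = c}.ncard = n := by
  classical
  have ht₀ne : t₀ ≠ 0 := by rintro rfl; rw [zero_pow hn] at ht₀; exact hc ht₀.symm
  have himg : {t : F | t ^ n = c} = (fun u => t₀ * u) '' {u : F | u ^ n = 1} := by
    ext t
    simp only [Set.mem_setOf_eq, Set.mem_image]
    constructor
    · intro ht
      refine ⟨t / t₀, ?_, by field_simp⟩
      rw [div_pow, ht, ht₀, div_self hc]
    · rintro ⟨u, hu, rfl⟩
      rw [mul_pow, hu, ht₀, mul_one]
  rw [himg, Set.ncard_image_of_injective _ (mul_right_injective₀ ht₀ne)]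
  obtain ⟨g, hg⟩ := IsCyclic.exists_generator (α := Fˣ)
  have hord : orderOf g = Fintype.card F - 1 := by
    rw [orderOf_eq_card_of_forall_mem_zpowers hg, Nat.card_eq_fintype_card, Fintype.card_units]
  have hcard2 : 1 < Fintype.card F := Fintype.one_lt_card
  have hordne : orderOf g ≠ 0 := by omega
  have hdvd' : n ∣ orderOf g := by rw [hord]; exact hdvd
  have hζ : orderOf (g ^ (orderOf g / n)) = n := orderOf_pow_orderOf_div hordne hdvd'
  have hprim : IsPrimitiveRoot (((g ^ (orderOf g / n) : Fˣ)) : F) n := by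
    have hpr := IsPrimitiveRoot.orderOf (g ^ (orderOf g / n))
    rw [hζ] at hpr
    exact IsPrimitiveRoot.coe_units_iff.mpr hpr
  have hset : {u : F | u ^ n = 1} = ↑(Polynomial.nthRootsFinset n (1 : F)) := by
    ext u
    simp [Polynomial.mem_nthRootsFinset (Nat.pos_of_ne_zero hn) (1 : F)]
  rw [hset, Set.ncard_coe_finset, hprim.card_nthRootsFinset]

lemma exists_pow_neg_one (p k q r : ℕ) [Fact p.Prime] (hk : 0 < k) (hq : q = p ^ k)
    (hr : 1 ≤ r) [Fintype F] [CharP F p] (hF : Fintype.card F = q ^ (2 * r)) :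
    ∃ t : F, t ^ (q - 1) = -1 := by
  classical
  rcases (Fact.out : p.Prime).eq_two_or_odd' with hp2 | hodd
  · haveI : CharP F 2 := hp2 ▸ ‹CharP F p›
    exact ⟨1, by rw [one_pow, CharTwo.neg_eq]⟩
  · have hp2le : 2 ≤ p := (Fact.out : p.Prime).two_le
    have hq2 : 2 ≤ q := by
      calc 2 ≤ p := hp2le
      _ ≤ p ^ k := Nat.le_self_pow hk.ne' p
      _ = q := hq.symm
    have hqodd : Odd q := by rw [hq]; exact hodd.pow
    obtain ⟨a, ha⟩ : (q - 1) ∣ q ^ r - 1 := by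
      simpa using Nat.sub_dvd_pow_sub_pow q 1 r
    obtain ⟨b, hb⟩ : ∃ b, q ^ r + 1 = 2 * b := by
      obtain ⟨m, hm⟩ := hqodd.pow (n := r)
      exact ⟨m + 1, by omega⟩
    have hqr : 2 ≤ q ^ r := le_trans hq2 (Nat.le_self_pow (by omega) q)
    have key : (q - 1) * (a * b) * 2 = q ^ (2 * r) - 1 := by
      have h1 : (q - 1) * (a * b) * 2 = ((q - 1) * a) * (2 * b) := by ring
      rw [h1, ← ha, ← hb]
      obtain ⟨y, hy⟩ : ∃ y, q ^ r = y + 1 := ⟨q ^ r - 1, by omega⟩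
      have h2 : q ^ (2 * r) = (y + 1) * (y + 1) := by
        rw [two_mul, pow_add, hy]
      rw [hy, h2]
      have h3 : y + 1 - 1 = y := by omega
      rw [h3]
      have h4 : (y + 1) * (y + 1) = (y * y + 2 * y) + 1 := by ring
      have h5 : y * (y + 1 + 1) = y * y + 2 * y := by ring
      rw [h4, h5, Nat.add_sub_cancel]
    obtain ⟨g, hg⟩ := IsCyclic.exists_generator (α := Fˣ)
    have hord : orderOf g = q ^ (2 * r) - 1 := by
      rw [orderOf_eq_card_of_forall_mem_zpowers hg, Nat.card_eq_fintype_card,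
        Fintype.card_units, hF]
    have hq2r : 2 ≤ q ^ (2 * r) := le_trans hq2 (Nat.le_self_pow (by omega) q)
    have hjord : (a * b * (q - 1)) * 2 = orderOf g := by rw [hord, ← key]; ring
    have hjpos : 0 < a * b * (q - 1) := by
      have hapos : 0 < a := by
        rcases Nat.eq_zero_or_pos a with h | h
        · rw [h, mul_zero] at ha; omega
        · exact h
      have hbpos : 0 < b := by omega
      have : 0 < q - 1 := by omega
      exact Nat.mul_pos (Nat.mul_pos hapos hbpos) this
    set j := a * b * (q - 1) with hj
    have hsq : (g ^ j) ^ 2 = 1 := by rw [← pow_mul, hjord, pow_orderOf_eq_one]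
    have hne1 : g ^ j ≠ 1 := by
      intro h1
      have hdvd2 := orderOf_dvd_of_pow_eq_one h1
      have hle : orderOf g ≤ j := Nat.le_of_dvd hjpos hdvd2
      omega
    have hval : ((g ^ j : Fˣ) : F) = -1 := by
      have hF2 : ((g ^ j : Fˣ) : F) * ((g ^ j : Fˣ) : F) = 1 := by
        rw [← Units.val_mul, ← pow_two, hsq, Units.val_one]
      rcases mul_self_eq_one_iff.mp hF2 with h | h
      · exact absurd (Units.val_eq_one.mp h) hne1
      · exact h
    refine ⟨((g : Fˣ) : F) ^ (a * b), ?_⟩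
    rw [← pow_mul]
    have : ((g : Fˣ) : F) ^ (a * b * (q - 1)) = ((g ^ j : Fˣ) : F) := by
      rw [hj, Units.val_pow_eq_pow_val]
    rw [this, hval]

lemma nondeg (p k q : ℕ) [Fact p.Prime] [Fintype F] [CharP F p] (hk : 0 < k) (hq : q = p ^ k)
    (e f : Fin 3 → F) (hind : LinearIndependent F ![e, f])
    (he : phi q e = 0) (hf0 : phi q f = 0)
    (hB : hpair q e f = 0) (hC : hpair q f e = 0) : False := by
  classical
  have hq0 : q ≠ 0 := by
    rw [hq]; exact pow_ne_zero _ (Fact.out : p.Prime).pos.ne'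
  have hpr := LinearIndependent.pair_iff.mp hind
  have hene : e ≠ 0 := fun h => one_ne_zero (hpr 1 0 (by simp [h])).1
  have hfne : f ≠ 0 := fun h => one_ne_zero (hpr 0 1 (by simp [h])).2
  set A : Matrix (Fin 2) (Fin 3) F := ![e, f] with hA
  set u : Fin 3 → F := ![e 0 ^ q, e 2 ^ q, e 1 ^ q] with hu
  set w : Fin 3 → F := ![f 0 ^ q, f 2 ^ q, f 1 ^ q] with hw
  have hLu : A.mulVecLin u = 0 := by
    ext i
    fin_cases i
    · show dotProduct (![e, f] 0) u = 0
      simp only [Matrix.cons_val_zero, dotProduct, Fin.sum_univ_three, hu,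
        Matrix.cons_val_one, Matrix.head_cons, Matrix.cons_val_two, Matrix.tail_cons]
      rw [phi] at he
      linear_combination he
    · show dotProduct (![e, f] 1) u = 0
      simp only [Matrix.cons_val_one, Matrix.head_cons, dotProduct, Fin.sum_univ_three,
        hu, Matrix.cons_val_zero, Matrix.cons_val_two, Matrix.tail_cons]
      rw [hpair] at hB
      linear_combination hB
  have hLw : A.mulVecLin w = 0 := by
    ext i
    fin_cases i
    · show dotProduct (![e, f] 0) w = 0
      simp only [Matrix.cons_val_zero, dotProduct, Fin.sum_univ_three, hw,
        Matrix.cons_val_one, Matrix.head_cons, Matrix.cons_val_two, Matrix.tail_cons]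
      rw [hpair] at hC
      linear_combination hC
    · show dotProduct (![e, f] 1) w = 0
      simp only [Matrix.cons_val_one, Matrix.head_cons, dotProduct, Fin.sum_univ_three,
        hw, Matrix.cons_val_zero, Matrix.cons_val_two, Matrix.tail_cons]
      rw [phi] at hf0
      linear_combination hf0
  have hune : u ≠ 0 := by
    intro h
    apply hene
    have h0 : e 0 = 0 := by
      have := congrFun h 0; simp only [hu, Matrix.cons_val_zero, Pi.zero_apply] at this
      exact pow_eq_zero_iff hq0 |>.mp this
    have h2 : e 2 = 0 := by
      have := congrFun h 1
      simp only [hu, Matrix.cons_val_one, Matrix.head_cons, Pi.zero_apply] at this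
      exact pow_eq_zero_iff hq0 |>.mp this
    have h1 : e 1 = 0 := by
      have := congrFun h 2
      simp only [hu, Matrix.cons_val_two, Matrix.tail_cons, Matrix.head_cons,
        Pi.zero_apply] at this
      exact pow_eq_zero_iff hq0 |>.mp this
    funext i
    fin_cases i <;> assumption
  have hwne : w ≠ 0 := by
    intro h
    apply hfne
    have h0 : f 0 = 0 := by
      have := congrFun h 0; simp only [hw, Matrix.cons_val_zero, Pi.zero_apply] at this
      exact pow_eq_zero_iff hq0 |>.mp this
    have h2 : f 2 = 0 := by
      have := congrFun h 1
      simp only [hw, Matrix.cons_val_one, Matrix.head_cons, Pi.zero_apply] at this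
      exact pow_eq_zero_iff hq0 |>.mp this
    have h1 : f 1 = 0 := by
      have := congrFun h 2
      simp only [hw, Matrix.cons_val_two, Matrix.tail_cons, Matrix.head_cons,
        Pi.zero_apply] at this
      exact pow_eq_zero_iff hq0 |>.mp this
    funext i
    fin_cases i <;> assumption
  have hrank : A.rank = 2 := by
    have := hind.rank_matrix (R := F) (M := A)
    simpa using this
  have hker : finrank F (LinearMap.ker A.mulVecLin) = 1 := by
    have hrn := LinearMap.finrank_range_add_finrank_ker A.mulVecLin
    have h3 : finrank F (Fin 3 → F) = 3 := by simp
    have h2 : finrank F (LinearMap.range A.mulVecLin) = 2 := hrank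
    rw [h3, h2] at hrn
    omega
  have hsp : Submodule.span F ({u} : Set (Fin 3 → F)) = LinearMap.ker A.mulVecLin := by
    apply Submodule.eq_of_le_of_finrank_le
    · rw [Submodule.span_le, Set.singleton_subset_iff]
      exact hLu
    · rw [hker, finrank_span_singleton hune]
  have hwsp : w ∈ Submodule.span F ({u} : Set (Fin 3 → F)) := by
    rw [hsp]; exact hLw
  obtain ⟨c, hc⟩ := Submodule.mem_span_singleton.mp hwsp
  have hcne : c ≠ 0 := by rintro rfl; rw [zero_smul] at hc; exact hwne hc.symm
  have hinj : Function.Injective (fun x : F => x ^ q) := by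
    intro x y hxy
    simp only at hxy
    have hsub : (x - y) ^ q = 0 := by
      rw [hq, sub_pow_char_pow, ← hq, hxy, sub_self]
    rw [pow_eq_zero_iff hq0] at hsub
    exact sub_eq_zero.mp hsub
  obtain ⟨c', hc'⟩ := (Finite.injective_iff_surjective.mp hinj) c
  simp only at hc'
  have hcomp : ∀ j : Fin 3, f j ^ q = c * e j ^ q := by
    intro j
    fin_cases j
    · have := congrFun hc 0
      simp only [hu, hw, Pi.smul_apply, Matrix.cons_val_zero, smul_eq_mul] at this
      exact this.symm
    · have := congrFun hc 2
      simp only [hu, hw, Pi.smul_apply, Matrix.cons_val_two, Matrix.tail_cons,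
        Matrix.head_cons, smul_eq_mul] at this
      exact this.symm
    · have := congrFun hc 1
      simp only [hu, hw, Pi.smul_apply, Matrix.cons_val_one, Matrix.head_cons,
        smul_eq_mul] at this
      exact this.symm
  have hfc : ∀ j : Fin 3, f j = c' * e j := by
    intro j
    apply hinj
    show f j ^ q = (c' * e j) ^ q
    rw [hcomp j, ← hc', mul_pow]
  have h0 : (-c') • e + (1 : F) • f = 0 := by
    funext j
    simp only [Pi.add_apply, Pi.smul_apply, smul_eq_mul, one_mul, neg_mul, Pi.zero_apply,
      hfc j]
    ring
  exact one_ne_zero (hpr (-c') 1 h0).2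

lemma Teq {q : ℕ} (hq2 : 2 ≤ q) (B C : F) (hB : B ≠ 0) (hC : C ≠ 0) :
    {t : F | B * t + C * t ^ q = 0} = insert (0:F) {t : F | t ^ (q-1) = -B/C} := by
  have hq1 : q - 1 ≠ 0 := by omega
  have hq0 : q ≠ 0 := by omega
  ext t
  simp only [Set.mem_setOf_eq, Set.mem_insert_iff]
  constructor
  · intro h
    by_cases ht : t = 0
    · exact Or.inl ht
    · right
      have hpow : t ^ q = t * t ^ (q - 1) := by
        rw [← pow_succ']
        congr 1
        omega
      rw [hpow] at h
      have h2 : t * (B + C * t ^ (q-1)) = 0 := by linear_combination h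
      have h3 : B + C * t ^ (q-1) = 0 := (mul_eq_zero.mp h2).resolve_left ht
      field_simp
      linear_combination h3
  · rintro (rfl | h)
    · simp [zero_pow hq0]
    · have ht : t ≠ 0 := by
        rintro rfl
        rw [zero_pow hq1] at h
        have h4 := h.symm
        rw [div_eq_zero_iff] at h4
        rcases h4 with h4 | h4
        · exact hB (neg_eq_zero.mp h4)
        · exact hC h4
      have hpow : t ^ q = t * t ^ (q - 1) := by
        rw [← pow_succ']
        congr 1
        omega
      rw [hpow, h]
      field_simp
      ring

lemma zero_notin_root_set {q : ℕ} (hq2 : 2 ≤ q) (B C : F) (hB : B ≠ 0) (hC : C ≠ 0) :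
    (0:F) ∉ {t : F | t ^ (q-1) = -B/C} := by
  intro h
  rw [Set.mem_setOf_eq, zero_pow (by omega : q - 1 ≠ 0)] at h
  have h4 := h.symm
  rw [div_eq_zero_iff] at h4
  rcases h4 with h4 | h4
  · exact hB (neg_eq_zero.mp h4)
  · exact hC h4

lemma Tcount_deg {q : ℕ} (hq0 : q ≠ 0) (B C : F)
    (h : (B ≠ 0 ∧ C = 0) ∨ (B = 0 ∧ C ≠ 0)) :
    {t : F | B * t + C * t ^ q = 0}.ncard = 1 := by
  have hset : {t : F | B * t + C * t ^ q = 0} = {0} := by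
    ext t
    simp only [Set.mem_setOf_eq, Set.mem_singleton_iff]
    rcases h with ⟨hB, rfl⟩ | ⟨rfl, hC⟩
    · constructor
      · intro h1
        have h2 : B * t = 0 := by linear_combination h1
        exact (mul_eq_zero.mp h2).resolve_left hB
      · rintro rfl; simp
    · constructor
      · intro h1
        have h2 : C * t ^ q = 0 := by linear_combination h1
        have h3 := (mul_eq_zero.mp h2).resolve_left hC
        exact pow_eq_zero_iff hq0 |>.mp h3
      · rintro rfl; simp [zero_pow hq0]
  rw [hset, Set.ncard_singleton]

lemma Tcount_sol {q : ℕ} (hq2 : 2 ≤ q) [Fintype F] (hdvd : (q-1) ∣ Fintype.card F - 1)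
    (B C : F) (hB : B ≠ 0) (hC : C ≠ 0) (hsol : ∃ t₀ : F, t₀ ^ (q-1) = -B/C) :
    {t : F | B * t + C * t ^ q = 0}.ncard = q := by
  obtain ⟨t₀, ht₀⟩ := hsol
  have hcne : -B/C ≠ 0 := div_ne_zero (neg_ne_zero.mpr hB) hC
  rw [Teq hq2 B C hB hC,
    Set.ncard_insert_of_notMem (zero_notin_root_set hq2 B C hB hC),
    pow_eq_card (q-1) (by omega) hdvd _ hcne t₀ ht₀]
  omega

lemma Tcount_nd {q : ℕ} (hq2 : 2 ≤ q) [Fintype F] (hdvd : (q-1) ∣ Fintype.card F - 1)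
    (B C : F) (hB : B ≠ 0) (hC : C ≠ 0) :
    {t : F | B * t + C * t ^ q = 0}.ncard = 1 ∨
      {t : F | B * t + C * t ^ q = 0}.ncard = q := by
  by_cases hsol : ∃ t₀ : F, t₀ ^ (q-1) = -B/C
  · exact Or.inr (Tcount_sol hq2 hdvd B C hB hC hsol)
  · left
    rw [Teq hq2 B C hB hC]
    have hemp : {t : F | t ^ (q-1) = -B/C} = ∅ := by
      ext t
      simp only [Set.mem_setOf_eq, Set.mem_empty_iff_false, iff_false]
      exact fun h => hsol ⟨t, h⟩
    rw [hemp]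
    simp

end Stmt13

theorem stmt_13 (p k q r : ℕ) [Fact p.Prime] (hk : 0 < k) (hq : q = p ^ k) (hr : 2 ≤ r)
    (F : Type) [Field F] [Fintype F] (hF : Fintype.card F = q ^ (2 * r))
    (Ω : Set (Projectivization F (Fin 3 → F)))
    (hΩ : Ω = {P | (P.rep 0) ^ (q + 1) + (P.rep 1) ^ q * P.rep 2 + P.rep 1 * (P.rep 2) ^ q = 0}) :
    (∀ ℓ : Submodule F (Fin 3 → F), Module.finrank F ℓ = 2 →
      {P | P ∈ Ω ∧ P.rep ∈ ℓ}.ncard ∈ ({0, 1, 2, q + 1} : Set ℕ)) ∧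
    (∃ ℓ : Submodule F (Fin 3 → F), Module.finrank F ℓ = 2 ∧
      {P | P ∈ Ω ∧ P.rep ∈ ℓ}.ncard = q + 1) := by
  classical
  open Stmt13 Module in
  haveI hcharP : CharP F p := Stmt13.charP_of_card p k q r hk hq (by omega) hF
  have hp2le : 2 ≤ p := (Fact.out : p.Prime).two_le
  have hq2 : 2 ≤ q := by
    rw [hq]
    calc 2 ≤ p := hp2le
    _ ≤ p ^ k := Nat.le_self_pow hk.ne' p
  have hq0 : q ≠ 0 := by omega
  have hfrob : ∀ a b : F, (a + b) ^ q = a ^ q + b ^ q := by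
    intro a b; rw [hq]; exact add_pow_char_pow a b p k
  have hdvd : (q - 1) ∣ Fintype.card F - 1 := by
    rw [hF]
    simpa using Nat.sub_dvd_pow_sub_pow q 1 (2 * r)
  have hsets : ∀ ℓ : Submodule F (Fin 3 → F),
      {P | P ∈ Ω ∧ P.rep ∈ ℓ}
        = {P : Projectivization F (Fin 3 → F) | Stmt13.phi q P.rep = 0 ∧ P.rep ∈ ℓ} := by
    intro ℓ; rw [hΩ]; rfl
  constructor
  · intro ℓ hℓ
    rw [hsets ℓ]
    by_cases hsub :
        {P : Projectivization F (Fin 3 → F) | Stmt13.phi q P.rep = 0 ∧ P.rep ∈ ℓ}.Subsingleton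
    · rcases hsub.eq_empty_or_singleton with h | ⟨x, h⟩ <;> rw [h] <;> simp
    · obtain ⟨P, hP, Q, hQ, hPQ⟩ := Set.not_subsingleton_iff.mp hsub
      obtain ⟨hP1, hP2⟩ := hP
      obtain ⟨hQ1, hQ2⟩ := hQ
      have hind : LinearIndependent F ![P.rep, Q.rep] := by
        rw [LinearIndependent.pair_iff' P.rep_nonzero]
        intro a ha
        have hane : a ≠ 0 := by
          rintro rfl; rw [zero_smul] at ha; exact Q.rep_nonzero ha.symm
        apply hPQ
        conv_lhs => rw [← Projectivization.mk_rep P]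
        conv_rhs => rw [← Projectivization.mk_rep Q]
        exact (Projectivization.mk_eq_mk_iff F _ _ _ _).mpr
          ⟨(Units.mk0 a hane)⁻¹, by
            rw [Units.smul_def, ← ha]
            simp only [Units.val_inv_eq_inv_val, Units.val_mk0]
            rw [inv_smul_smul₀ hane]⟩
      have hspan : Submodule.span F ({P.rep, Q.rep} : Set (Fin 3 → F)) = ℓ := by
        apply Submodule.eq_of_le_of_finrank_le
        · rw [Submodule.span_le]
          intro x hx
          simp only [Set.mem_insert_iff, Set.mem_singleton_iff] at hx
          rcases hx with rfl | rfl
          · exact hP2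
          · exact hQ2
        · have hr2 : Set.range ![P.rep, Q.rep] = {P.rep, Q.rep} := by
            ext x
            simp [Fin.exists_fin_two, eq_comm, or_comm]
          have hfr := finrank_span_eq_card hind
          rw [hr2] at hfr
          rw [hℓ, hfr]
          simp
      rw [← hspan, Stmt13.count q hfrob P.rep Q.rep hind hP1 hQ1]
      by_cases hB : Stmt13.hpair q P.rep Q.rep = 0
      · by_cases hC : Stmt13.hpair q Q.rep P.rep = 0
        · exact (Stmt13.nondeg p k q hk hq P.rep Q.rep hind hP1 hQ1 hB hC).elim
        · rw [Stmt13.Tcount_deg hq0 _ _ (Or.inr ⟨hB, hC⟩)]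
          simp
      · by_cases hC : Stmt13.hpair q Q.rep P.rep = 0
        · rw [Stmt13.Tcount_deg hq0 _ _ (Or.inl ⟨hB, hC⟩)]
          simp
        · rcases Stmt13.Tcount_nd hq2 hdvd _ _ hB hC with h | h <;> rw [h]
          · simp
          · have h1q : 1 + q = q + 1 := by omega
            rw [h1q]
            simp
  · set e : Fin 3 → F := ![0, 1, 0] with hedef
    set f : Fin 3 → F := ![0, 0, 1] with hfdef
    have hene : e ≠ 0 := by
      intro h
      have h1 := congrFun h 1
      rw [hedef] at h1
      simp at h1
    have hind : LinearIndependent F ![e, f] := by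
      rw [LinearIndependent.pair_iff' hene]
      intro a ha
      have h2 := congrFun ha 2
      rw [hedef, hfdef] at h2
      simp at h2
    have he : Stmt13.phi q e = 0 := by
      rw [Stmt13.phi, hedef]
      simp [zero_pow hq0, zero_pow (by omega : q + 1 ≠ 0)]
    have hf0 : Stmt13.phi q f = 0 := by
      rw [Stmt13.phi, hfdef]
      simp [zero_pow hq0, zero_pow (by omega : q + 1 ≠ 0)]
    have hBv : Stmt13.hpair q e f = 1 := by
      rw [Stmt13.hpair, hedef, hfdef]
      simp [zero_pow hq0]
    have hCv : Stmt13.hpair q f e = 1 := by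
      rw [Stmt13.hpair, hedef, hfdef]
      simp [zero_pow hq0]
    refine ⟨Submodule.span F ({e, f} : Set (Fin 3 → F)), ?_, ?_⟩
    · have hr2 : Set.range ![e, f] = {e, f} := by
        ext x
        simp [Fin.exists_fin_two, eq_comm, or_comm]
      have hfr := finrank_span_eq_card hind
      rw [hr2] at hfr
      rw [hfr]
      simp
    · rw [hsets, Stmt13.count q hfrob e f hind he hf0, hBv, hCv]
      have hsol : ∃ t₀ : F, t₀ ^ (q - 1) = -(1:F)/1 := by
        obtain ⟨t₀, ht₀⟩ := Stmt13.exists_pow_neg_one p k q r hk hq (by omega) hF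
        exact ⟨t₀, by rw [ht₀]; norm_num⟩
      rw [Stmt13.Tcount_sol hq2 hdvd 1 1 one_ne_zero one_ne_zero hsol]
      omega
end
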